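/- For every ε > 0 there exist r₀ ∈ ℕ and δ > 0 such that: every finite Eulerian set M ⊆ 𝔽₂ⁿ \ {0} with rank(M) ≥ r₀ and |M| ≥ 2^{(1−δ)·rank(M)} can be partitioned into at most (2 + ε)·|M|/(rank(M) + 1) circuits. -/

import Mathlib

open Finset

/-- A circuit: a minimal nonempty subset of the ambient group minus `{0}` with zero sum. -/
def IsCircuit {V : Type*} [AddCommGroup V] [DecidableEq V] (C : Finset V) : Prop :=
  C.Nonempty ∧ (0 : V) ∉ C ∧ ∑ x ∈ C, x = 0 ∧
    ∀ D ⊆ C, D.Nonempty → ∑ x ∈ D, x = 0 → D = C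
/-- rank: maximum size of a linearly independent subset of `M`. -/
noncomputable def rk {n : ℕ} (M : Finset (Fin n → ZMod 2)) : ℕ :=
  sSup {k : ℕ | ∃ s ⊆ M, s.card = k ∧
    LinearIndependent (ZMod 2) (fun x : s => (x : Fin n → ZMod 2))}
/-- `𝒞` is a partition of `M` into pairwise disjoint circuits. -/
def IsCircuitPartition {V : Type*} [AddCommGroup V] [DecidableEq V]
    (M : Finset V) (𝒞 : Finset (Finset V)) : Prop :=
  (∀ C ∈ 𝒞, IsCircuit C) ∧
  (∀ C ∈ 𝒞, ∀ D ∈ 𝒞, C ≠ D → Disjoint C D) ∧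
  𝒞.biUnion id = M

set_option linter.unusedSectionVars false

section Comb
variable {V : Type*} [AddCommGroup V] [Module (ZMod 2) V] [DecidableEq V]

lemma char2 (v : V) : v + v = 0 := by
  have h : v + v = (2 : ZMod 2) • v := by rw [two_smul]
  rw [h, show (2 : ZMod 2) = 0 by decide, zero_smul]

/-- abbreviation for independence of a finset -/
def FIndep (S : Finset V) : Prop := LinearIndependent (ZMod 2) (fun x : S => (x : V))

lemma FIndep.mono {S T : Finset V} (h : T ⊆ S) (hS : FIndep S) : FIndep T := by
  have : (fun x : T => (x : V)) = (fun x : S => (x : V)) ∘ (fun x : T => ⟨x.1, h x.2⟩) := rfl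
  rw [FIndep, this]
  exact hS.comp _ (fun a b hab => Subtype.ext (congrArg Subtype.val hab : (⟨a.1, h a.2⟩ : {x // x ∈ S}).1 = _))

lemma FIndep.sum_ne_zero {T : Finset V} (hT : FIndep T) (hne : T.Nonempty) :
    ∑ x ∈ T, x ≠ 0 := by
  intro h
  obtain ⟨a, ha⟩ := hne
  have h2 := Fintype.linearIndependent_iff.mp hT (fun _ => 1) ?_ ⟨a, ha⟩
  · exact one_ne_zero h2
  · rw [← h]
    simp only [one_smul]
    exact Finset.sum_attach T (fun x => x)

lemma FIndep.zero_not_mem {T : Finset V} (hT : FIndep T) : (0 : V) ∉ T := by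
  intro h0
  exact (hT.mono (Finset.singleton_subset_iff.mpr h0)).sum_ne_zero ⟨0, by simp⟩ (by simp)

lemma FIndep.sum_inj {B S T : Finset V} (hB : FIndep B) (hS : S ⊆ B) (hT : T ⊆ B)
    (h : ∑ x ∈ S, x = ∑ x ∈ T, x) : S = T := by
  have h1 := Finset.sum_inter_add_sum_sdiff S T (id : V → V)
  have h2 := Finset.sum_inter_add_sum_sdiff T S (id : V → V)
  rw [Finset.inter_comm T S] at h2
  simp only [id] at h1 h2
  have hd : ∑ x ∈ S \ T, x = ∑ x ∈ T \ S, x := by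
    have := h1.trans (h.trans h2.symm)
    exact add_left_cancel this
  have hdisj : Disjoint (S \ T) (T \ S) := disjoint_sdiff_sdiff
  have hsum : ∑ x ∈ (S \ T) ∪ (T \ S), x = 0 := by
    rw [Finset.sum_union hdisj, hd, char2]
  have hsub : (S \ T) ∪ (T \ S) ⊆ B :=
    Finset.union_subset ((Finset.sdiff_subset).trans hS) ((Finset.sdiff_subset).trans hT)
  have hempty : (S \ T) ∪ (T \ S) = ∅ := by
    by_contra hne
    exact (hB.mono hsub).sum_ne_zero (Finset.nonempty_of_ne_empty hne) hsum
  rw [Finset.union_eq_empty] at hempty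
  exact Finset.Subset.antisymm
    (fun a ha => by
      by_contra hna
      exact (Finset.notMem_empty a) (hempty.1 ▸ Finset.mem_sdiff.mpr ⟨ha, hna⟩))
    (fun a ha => by
      by_contra hna
      exact (Finset.notMem_empty a) (hempty.2 ▸ Finset.mem_sdiff.mpr ⟨ha, hna⟩))

lemma isCircuit_insert_sum {S : Finset V} (hS : FIndep S) (hne : S.Nonempty) {x : V}
    (hx : x = ∑ y ∈ S, y) (hxS : x ∉ S) : IsCircuit (insert x S) := by
  have hx0 : x ≠ 0 := hx ▸ hS.sum_ne_zero hne
  have hsum : ∑ y ∈ insert x S, y = 0 := by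
    rw [Finset.sum_insert hxS, ← hx, char2]
  refine ⟨⟨x, Finset.mem_insert_self _ _⟩, ?_, hsum, ?_⟩
  · intro h0
    rcases Finset.mem_insert.mp h0 with h | h
    · exact hx0 h.symm
    · exact hS.zero_not_mem h
  · intro D hD hDne hDsum
    by_cases hxD : x ∈ D
    · have hD' : D.erase x ⊆ S := (Finset.subset_insert_iff).mp hD
      have hDx : D = insert x (D.erase x) := (Finset.insert_erase hxD).symm
      have hkey : x + ∑ y ∈ D.erase x, y = 0 := by
        have := Finset.sum_insert (a := x) (s := D.erase x) (f := id)
          (Finset.notMem_erase x D)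
        simp only [id] at this
        rw [← this, ← hDx, hDsum]
      have hsum' : ∑ y ∈ D.erase x, y = ∑ y ∈ S, y :=
        (eq_neg_of_add_eq_zero_right hkey).trans
          ((neg_eq_of_add_eq_zero_left (char2 x)).trans hx)
      have := hS.sum_inj hD' (Finset.Subset.refl S) hsum'
      rw [hDx, this]
    · have hDS : D ⊆ S := (Finset.subset_insert_iff_of_notMem hxD).mp hD
      exact absurd hDsum ((hS.mono hDS).sum_ne_zero hDne)

end Comb

section Comb2
variable {V : Type*} [AddCommGroup V] [Module (ZMod 2) V] [DecidableEq V]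

open Classical in
lemma exists_rep {A : Finset V} (h0 : (0:V) ∉ A) :
    ∃ B : Finset V, B ⊆ A ∧ FIndep B ∧
      ∀ x ∈ A, ∃ S ⊆ B, S.Nonempty ∧ ∑ y ∈ S, y = x := by
  classical
  have hPne : (A.powerset.filter (fun s => FIndep s)).Nonempty := by
    refine ⟨∅, Finset.mem_filter.mpr ⟨Finset.empty_mem_powerset A, ?_⟩⟩
    have : IsEmpty ((∅ : Finset V) : Type _) := ⟨fun x => Finset.notMem_empty _ x.2⟩
    exact linearIndependent_empty_type
  obtain ⟨B, hBmem, hBmax⟩ := Finset.exists_max_image _ Finset.card hPne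
  rw [Finset.mem_filter, Finset.mem_powerset] at hBmem
  obtain ⟨hBA, hBind⟩ := hBmem
  refine ⟨B, hBA, hBind, ?_⟩
  have hspan : ∀ x ∈ A, x ∈ Submodule.span (ZMod 2) (B : Set V) := by
    intro x hx
    by_contra hxs
    have hxB : x ∉ B := fun hxB => hxs (Submodule.subset_span (by exact_mod_cast hxB))
    have hins : FIndep (insert x B) := by
      have hset : LinearIndependent (ZMod 2) (fun b : ((B : Set V)) => (b : V)) := hBind
      have h2 := LinearIndepOn.id_insert hset hxs
      have h3 : LinearIndependent (ZMod 2)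
          (fun b : (((insert x B : Finset V) : Set V)) => (b : V)) := by
        rw [Finset.coe_insert]; exact h2
      exact h3
    have hmem : insert x B ∈ A.powerset.filter (fun s => FIndep s) :=
      Finset.mem_filter.mpr ⟨Finset.mem_powerset.mpr (Finset.insert_subset hx hBA), hins⟩
    have := hBmax _ hmem
    rw [Finset.card_insert_of_notMem hxB] at this
    omega
  intro x hx
  obtain ⟨f, -, hf⟩ := Submodule.mem_span_finset.mp (hspan x hx)
  refine ⟨B.filter (fun i => f i = 1), Finset.filter_subset _ _, ?_, ?_⟩
  · rw [Finset.nonempty_iff_ne_empty]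
    intro hemp
    apply h0
    have : x = 0 := by
      rw [← hf]
      apply Finset.sum_eq_zero
      intro i hi
      have hfi : f i = 0 ∨ f i = 1 := by
        have : ∀ c : ZMod 2, c = 0 ∨ c = 1 := by decide
        exact this (f i)
      rcases hfi with h | h
      · rw [h, zero_smul]
      · exact absurd (Finset.eq_empty_iff_forall_notMem.mp hemp i) (by
          simp only [Finset.mem_filter, not_and]
          intro hcon
          exact absurd (hcon hi h) (fun _ => by exact absurd h (by simp_all)))
    exact this ▸ hx
  · rw [← hf, Finset.sum_filter]
    apply Finset.sum_congr rfl
    intro i _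
    have hfi : f i = 0 ∨ f i = 1 := by
      have : ∀ c : ZMod 2, c = 0 ∨ c = 1 := by decide
      exact this (f i)
    rcases hfi with h | h <;> simp [h]

end Comb2

section Comb3
variable {V : Type*} [AddCommGroup V] [Module (ZMod 2) V] [DecidableEq V]

lemma exists_big_circuit {A : Finset V} (h0 : (0:V) ∉ A) {r m : ℕ} (hm : 1 ≤ m)
    (hr : ∀ s ⊆ A, FIndep s → s.card ≤ r)
    (hbig : ∑ i ∈ Finset.Icc 1 m, r.choose i < A.card) :
    ∃ C ⊆ A, IsCircuit C ∧ m + 2 ≤ C.card := by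
  classical
  obtain ⟨B, hBA, hBind, hrep⟩ := exists_rep h0
  have hBr : B.card ≤ r := hr B hBA hBind
  -- choose a representation for each x
  choose S hSB hSne hSsum using hrep
  by_cases hbigS : ∃ x ∈ A, ∃ hx : x ∈ A, m + 1 ≤ (S x hx).card
  · obtain ⟨x, hx, hx', hcard⟩ := hbigS
    set T := S x hx' with hT
    have hTB : T ⊆ B := hSB x hx'
    have hTsum : ∑ y ∈ T, y = x := hSsum x hx'
    have hxT : x ∉ T := by
      intro hxT
      have hxB : ({x} : Finset V) ⊆ B := Finset.singleton_subset_iff.mpr (hTB hxT)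
      have : T = {x} := hBind.sum_inj hTB hxB (by simp [hTsum])
      rw [this] at hcard
      simp at hcard
      omega
    refine ⟨insert x T, ?_, ?_, ?_⟩
    · exact Finset.insert_subset hx (hTB.trans hBA)
    · exact isCircuit_insert_sum (hBind.mono hTB) (hSne x hx') hTsum.symm hxT
    · rw [Finset.card_insert_of_notMem hxT]; omega
  · exfalso
    push_neg at hbigS
    -- injection x ↦ S x into small nonempty subsets of B
    have hinj : ∀ x ∈ A, ∀ y ∈ A, ∀ hx : x ∈ A, ∀ hy : y ∈ A,
        S x hx = S y hy → x = y := by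
      intro x hx y hy hx' hy' h
      rw [← hSsum x hx', ← hSsum y hy', h]
    have hcardle : A.card ≤
        ((Finset.Icc 1 m).biUnion (fun i => B.powersetCard i)).card := by
      apply Finset.card_le_card_of_injOn (fun x => if hx : x ∈ A then S x hx else ∅)
      · intro x hx
        simp only [Finset.mem_coe] at hx ⊢; simp only [hx, dif_pos]
        rw [Finset.mem_biUnion]
        refine ⟨(S x hx).card, ?_, ?_⟩
        · rw [Finset.mem_Icc]
          constructor
          · exact Finset.card_pos.mpr (hSne x hx)
          · have := hbigS x hx hx; omega
        · rw [Finset.mem_powersetCard]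
          exact ⟨hSB x hx, rfl⟩
      · intro x hx y hy hxy
        simp only [Finset.mem_coe] at hx hy
        simp only [hx, hy, dif_pos] at hxy
        exact hinj x hx y hy hx hy hxy
    have hcount : ((Finset.Icc 1 m).biUnion (fun i => B.powersetCard i)).card ≤
        ∑ i ∈ Finset.Icc 1 m, r.choose i := by
      calc ((Finset.Icc 1 m).biUnion (fun i => B.powersetCard i)).card
          ≤ ∑ i ∈ Finset.Icc 1 m, (B.powersetCard i).card := Finset.card_biUnion_le
        _ ≤ ∑ i ∈ Finset.Icc 1 m, r.choose i := by
            apply Finset.sum_le_sum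
            intro i _
            rw [Finset.card_powersetCard]
            exact Nat.choose_le_choose i hBr
    omega

lemma exists_circuit_of_sum_zero {A : Finset V} (h0 : (0:V) ∉ A) (hne : A.Nonempty)
    (hsum : ∑ x ∈ A, x = 0) : ∃ C ⊆ A, IsCircuit C := by
  classical
  have hPne : (A.powerset.filter (fun C => C.Nonempty ∧ ∑ x ∈ C, x = 0)).Nonempty :=
    ⟨A, Finset.mem_filter.mpr ⟨Finset.mem_powerset_self A, hne, hsum⟩⟩
  obtain ⟨C, hCmem, hCmin⟩ := Finset.exists_min_image _ Finset.card hPne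
  rw [Finset.mem_filter, Finset.mem_powerset] at hCmem
  obtain ⟨hCA, hCne, hCsum⟩ := hCmem
  refine ⟨C, hCA, hCne, fun h => h0 (hCA h), hCsum, ?_⟩
  intro D hDC hDne hDsum
  have hDmem : D ∈ A.powerset.filter (fun C => C.Nonempty ∧ ∑ x ∈ C, x = 0) :=
    Finset.mem_filter.mpr ⟨Finset.mem_powerset.mpr (hDC.trans hCA), hDne, hDsum⟩
  exact Finset.eq_of_subset_of_card_le hDC (hCmin D hDmem)

end Comb3

section Comb4
variable {V : Type*} [AddCommGroup V] [Module (ZMod 2) V] [DecidableEq V]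

lemma partition_aux {r m : ℕ} (hm : 1 ≤ m) :
    ∀ (k : ℕ) (A : Finset V), A.card ≤ k → (0:V) ∉ A → ∑ x ∈ A, x = 0 →
    (∀ s ⊆ A, FIndep s → s.card ≤ r) →
    ∃ 𝒞 : Finset (Finset V), IsCircuitPartition A 𝒞 ∧
      (m + 2) * 𝒞.card ≤ A.card + (m + 2) * (min A.card (∑ i ∈ Finset.Icc 1 m, r.choose i)) := by
  classical
  intro k
  induction k with
  | zero =>
    intro A hk h0 hsum hr
    have : A = ∅ := Finset.card_eq_zero.mp (Nat.le_zero.mp hk)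
    subst this
    exact ⟨∅, ⟨by simp, by simp, by simp⟩, by simp⟩
  | succ k ih =>
    intro A hk h0 hsum hr
    by_cases hAe : A = ∅
    · subst hAe
      exact ⟨∅, ⟨by simp, by simp, by simp⟩, by simp⟩
    have hAne : A.Nonempty := Finset.nonempty_of_ne_empty hAe
    set Φ := ∑ i ∈ Finset.Icc 1 m, r.choose i with hΦ
    -- obtain a circuit C, with size ≥ m+2 in the dense case
    obtain ⟨C, hCA, hCcirc, hCsize⟩ :
        ∃ C ⊆ A, IsCircuit C ∧ (Φ < A.card → m + 2 ≤ C.card) := by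
      by_cases hdense : Φ < A.card
      · obtain ⟨C, hCA, hC, hCs⟩ := exists_big_circuit h0 hm hr hdense
        exact ⟨C, hCA, hC, fun _ => hCs⟩
      · obtain ⟨C, hCA, hC⟩ := exists_circuit_of_sum_zero h0 hAne hsum
        exact ⟨C, hCA, hC, fun h => absurd h hdense⟩
    have hCne : C.Nonempty := hCcirc.1
    have hCsum : ∑ x ∈ C, x = 0 := hCcirc.2.2.1
    set A' := A \ C with hA'
    have hA'card : A'.card = A.card - C.card := Finset.card_sdiff_of_subset hCA
    have hCpos : 1 ≤ C.card := Finset.card_pos.mpr hCne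
    have hCle : C.card ≤ A.card := Finset.card_le_card hCA
    have hk' : A'.card ≤ k := by omega
    have h0' : (0:V) ∉ A' := fun h => h0 (Finset.mem_sdiff.mp h).1
    have hsum' : ∑ x ∈ A', x = 0 := by
      have := Finset.sum_sdiff (f := id) hCA
      simp only [id] at this
      have h2 : ∑ x ∈ A', x + ∑ x ∈ C, x = ∑ x ∈ A, x := this
      rw [hCsum, hsum] at h2
      simpa using h2
    have hr' : ∀ s ⊆ A', FIndep s → s.card ≤ r :=
      fun s hs => hr s (hs.trans (Finset.sdiff_subset))
    obtain ⟨𝒞', ⟨hcirc', hdisj', hbi'⟩, hbound'⟩ := ih A' hk' h0' hsum' hr'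
    have hsub' : ∀ D ∈ 𝒞', D ⊆ A' := by
      intro D hD
      rw [← hbi']
      exact Finset.subset_biUnion_of_mem id hD
    have hCnot : C ∉ 𝒞' := by
      intro hmem
      obtain ⟨y, hy⟩ := hCne
      have := hsub' C hmem hy
      exact (Finset.mem_sdiff.mp this).2 hy
    refine ⟨insert C 𝒞', ⟨?_, ?_, ?_⟩, ?_⟩
    · intro D hD
      rcases Finset.mem_insert.mp hD with h | h
      · exact h ▸ hCcirc
      · exact hcirc' D h
    · intro D hD E hE hne
      rcases Finset.mem_insert.mp hD with h | h <;>
        rcases Finset.mem_insert.mp hE with h2 | h2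
      · exact absurd (h.trans h2.symm) hne
      · subst h
        exact Finset.disjoint_of_subset_right (hsub' E h2) Finset.disjoint_sdiff
      · subst h2
        exact Finset.disjoint_of_subset_left (hsub' D h) Finset.sdiff_disjoint
      · exact hdisj' D h E h2 hne
    · rw [Finset.biUnion_insert, hbi']
      simp only [id]
      exact Finset.union_sdiff_of_subset hCA
    · rw [Finset.card_insert_of_notMem hCnot]
      by_cases hdense : Φ < A.card
      · -- dense case: C.card ≥ m + 2
        have hCbig := hCsize hdense
        have hminle : min A'.card Φ ≤ min A.card Φ := by
          apply min_le_min_right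
          omega
        calc (m + 2) * (𝒞'.card + 1) = (m + 2) * 𝒞'.card + (m + 2) := by ring
          _ ≤ (A'.card + (m + 2) * min A'.card Φ) + (m + 2) := by omega
          _ ≤ (A'.card + (m + 2) * min A.card Φ) + (m + 2) := by
              have := Nat.mul_le_mul_left (m + 2) hminle
              omega
          _ ≤ A.card + (m + 2) * min A.card Φ := by
              have : A'.card + (m + 2) ≤ A.card := by omega
              omega
      · -- sparse case: A.card ≤ Φ
        push_neg at hdense
        have hminA : min A.card Φ = A.card := min_eq_left hdense
        have hminA' : min A'.card Φ = A'.card := min_eq_left (by omega)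
        rw [hminA]
        rw [hminA'] at hbound'
        have hstep : (m + 2) * A'.card + (m + 2) ≤ (m + 2) * A.card := by
          have h1 : A'.card + 1 ≤ A.card := by omega
          calc (m + 2) * A'.card + (m + 2) = (m + 2) * (A'.card + 1) := by ring
            _ ≤ (m + 2) * A.card := Nat.mul_le_mul_left _ h1
        calc (m + 2) * (𝒞'.card + 1) = (m + 2) * 𝒞'.card + (m + 2) := by ring
          _ ≤ (A'.card + (m + 2) * A'.card) + (m + 2) := by omega
          _ ≤ A.card + (m + 2) * A.card := by omega

end Comb4

lemma gpowers {γ : ℝ} (h0 : 0 < γ) (h1 : γ ≤ 1/10) :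
    γ^3 ≤ γ^2/10 ∧ γ^4 ≤ γ^2/100 ∧ γ^5 ≤ γ^2/1000 ∧ γ^6 ≤ γ^2/10000 := by
  have h2 : (0:ℝ) ≤ γ^2 := sq_nonneg γ
  have e3 : γ^3 ≤ γ^2/10 := by nlinarith
  have e4 : γ^4 ≤ γ^2/100 := by nlinarith
  have e5 : γ^5 ≤ γ^2/1000 := by nlinarith
  have e6 : γ^6 ≤ γ^2/10000 := by nlinarith [pow_pos h0 3]
  exact ⟨e3, e4, e5, e6⟩

lemma sqrt_ineq {γ : ℝ} (h0 : 0 < γ) (h1 : γ ≤ 1/10) :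
    (1 - γ) * (1 + γ^2/4) ≤ (1 + 2*γ^2) * Real.sqrt (1 - 2*γ) := by
  obtain ⟨e3, e4, e5, e6⟩ := gpowers h0 h1
  have h2 : (0:ℝ) ≤ γ^2 := sq_nonneg γ
  have ht : (0:ℝ) ≤ 1 - 2*γ := by linarith
  have hA : (0:ℝ) ≤ (1 - γ) * (1 + γ^2/4) := by nlinarith
  have hB : (0:ℝ) ≤ 1 + 2*γ^2 := by nlinarith
  have hsq : ((1 - γ) * (1 + γ^2/4))^2 ≤ ((1 + 2*γ^2))^2 * (1 - 2*γ) := by nlinarith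
  calc (1 - γ) * (1 + γ^2/4) = Real.sqrt (((1 - γ) * (1 + γ^2/4))^2) := (Real.sqrt_sq hA).symm
    _ ≤ Real.sqrt (((1 + 2*γ^2))^2 * (1 - 2*γ)) := Real.sqrt_le_sqrt hsq
    _ = (1 + 2*γ^2) * Real.sqrt (1 - 2*γ) := by
        rw [Real.sqrt_mul (sq_nonneg _), Real.sqrt_sq hB]

lemma core_ineq {γ : ℝ} (h0 : 0 < γ) (h1 : γ ≤ 1/10) :
    1 + (1 - 2*γ) ≤ 2 ^ ((1:ℝ) - 2*(γ^2/8)) * (1 - 2*γ) ^ ((1:ℝ)/2 - γ) := by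
  have hx0 : (0:ℝ) < 1 - 2*γ := by linarith
  have h2 : (0:ℝ) ≤ γ^2 := sq_nonneg γ
  have hsplit : (1 - 2*γ) ^ ((1:ℝ)/2 - γ)
      = Real.sqrt (1 - 2*γ) * ((1 - 2*γ) ^ (γ:ℝ))⁻¹ := by
    rw [show (1:ℝ)/2 - γ = 1/2 + (-γ) from by ring, Real.rpow_add hx0,
      Real.rpow_neg hx0.le, Real.sqrt_eq_rpow]
  -- Bernoulli: (1-2γ)^γ ≤ 1 - 2γ^2
  have hbern : (1 - 2*γ) ^ (γ:ℝ) ≤ 1 - 2*γ^2 := by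
    have := rpow_one_add_le_one_add_mul_self (s := -(2*γ)) (by linarith) (p := γ) h0.le
      (by linarith)
    calc (1 - 2*γ) ^ (γ:ℝ) = (1 + -(2*γ)) ^ (γ:ℝ) := by ring_nf
      _ ≤ 1 + γ * -(2*γ) := this
      _ = 1 - 2*γ^2 := by ring
  have hpos1 : (0:ℝ) < 1 - 2*γ^2 := by nlinarith
  have hposr : (0:ℝ) < (1 - 2*γ) ^ (γ:ℝ) := Real.rpow_pos_of_pos hx0 _
  have hinv : (1 + 2*γ^2) ≤ ((1 - 2*γ) ^ (γ:ℝ))⁻¹ := by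
    rw [le_inv_comm₀ (by positivity) hposr]
    calc (1 - 2*γ) ^ (γ:ℝ) ≤ 1 - 2*γ^2 := hbern
      _ ≤ (1 + 2*γ^2)⁻¹ := by
          have hm : (1 - 2*γ^2) * (1 + 2*γ^2) ≤ 1 := by nlinarith
          rw [← one_div]
          rw [le_div_iff₀ (by positivity)]
          exact hm
  -- 2^(2δ) ≤ 1 + γ²/4
  have hpow2 : (2:ℝ) ^ ((2:ℝ)*(γ^2/8)) ≤ 1 + γ^2/4 := by
    have := rpow_one_add_le_one_add_mul_self (s := (1:ℝ)) (by norm_num)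
      (p := 2*(γ^2/8)) (by positivity) (by nlinarith)
    calc (2:ℝ) ^ ((2:ℝ)*(γ^2/8)) = (1+1:ℝ) ^ ((2:ℝ)*(γ^2/8)) := by norm_num
      _ ≤ 1 + (2*(γ^2/8)) * 1 := this
      _ = 1 + γ^2/4 := by ring
  have hsplit2 : (2:ℝ) ^ ((1:ℝ) - 2*(γ^2/8)) = 2 / (2:ℝ) ^ ((2:ℝ)*(γ^2/8)) := by
    rw [show (1:ℝ) - 2*(γ^2/8) = 1 + -(2*(γ^2/8)) from by ring, Real.rpow_add (by norm_num),
      Real.rpow_neg (by norm_num), Real.rpow_one]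
    ring
  have hq : 2 / (1 + γ^2/4) ≤ 2 / (2:ℝ) ^ ((2:ℝ)*(γ^2/8)) :=
    div_le_div_of_nonneg_left (by norm_num) (Real.rpow_pos_of_pos (by norm_num) _) hpow2
  have hkey : 1 + (1 - 2*γ) ≤ (2 / (1 + γ^2/4)) * ((1 + 2*γ^2) * Real.sqrt (1 - 2*γ)) := by
    rw [div_mul_eq_mul_div, le_div_iff₀ (by positivity)]
    calc (1 + (1 - 2*γ)) * (1 + γ^2/4) = 2 * ((1-γ) * (1 + γ^2/4)) := by ring
      _ ≤ 2 * ((1 + 2*γ^2) * Real.sqrt (1 - 2*γ)) := by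
          have := sqrt_ineq h0 h1
          linarith
  calc 1 + (1 - 2*γ) ≤ (2 / (1 + γ^2/4)) * ((1 + 2*γ^2) * Real.sqrt (1 - 2*γ)) := hkey
    _ ≤ (2 / (2:ℝ) ^ ((2:ℝ)*(γ^2/8))) * ((1 + 2*γ^2) * Real.sqrt (1 - 2*γ)) := by
        apply mul_le_mul_of_nonneg_right hq
        positivity
    _ ≤ (2 / (2:ℝ) ^ ((2:ℝ)*(γ^2/8))) * (((1 - 2*γ) ^ (γ:ℝ))⁻¹ * Real.sqrt (1 - 2*γ)) := by
        apply mul_le_mul_of_nonneg_left _ (by positivity)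
        apply mul_le_mul_of_nonneg_right hinv (Real.sqrt_nonneg _)
    _ = 2 ^ ((1:ℝ) - 2*(γ^2/8)) * (1 - 2*γ) ^ ((1:ℝ)/2 - γ) := by
        rw [hsplit, hsplit2]
        ring

lemma chernoff_sum (r m : ℕ) {x : ℝ} (hx0 : 0 < x) (hx1 : x ≤ 1) :
    (∑ i ∈ Finset.Icc 1 m, (r.choose i : ℝ)) * x^m ≤ (1+x)^r := by
  classical
  calc (∑ i ∈ Finset.Icc 1 m, (r.choose i : ℝ)) * x^m
      = ∑ i ∈ Finset.Icc 1 m, (r.choose i : ℝ) * x^m := by rw [Finset.sum_mul]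
    _ ≤ ∑ i ∈ Finset.Icc 1 m, (r.choose i : ℝ) * x^i := by
        apply Finset.sum_le_sum
        intro i hi
        have him : i ≤ m := (Finset.mem_Icc.mp hi).2
        exact mul_le_mul_of_nonneg_left (pow_le_pow_of_le_one hx0.le hx1 him)
          (by positivity)
    _ = ∑ i ∈ (Finset.Icc 1 m).filter (fun i => i ≤ r), (r.choose i : ℝ) * x^i := by
        symm
        apply Finset.sum_filter_of_ne
        intro i _ hne
        by_contra hir
        push_neg at hir
        rw [Nat.choose_eq_zero_of_lt hir] at hne
        simp at hne
    _ ≤ ∑ i ∈ Finset.range (r+1), (r.choose i : ℝ) * x^i := by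
        apply Finset.sum_le_sum_of_subset_of_nonneg
        · intro i hi
          rw [Finset.mem_filter] at hi
          rw [Finset.mem_range]
          omega
        · intro i _ _
          positivity
    _ = (x+1)^r := by
        rw [add_pow]
        apply Finset.sum_congr rfl
        intro i _
        rw [one_pow]
        ring
    _ = (1+x)^r := by ring

lemma growth_ineq {δ c : ℝ} (hδ : 0 < δ) (hc : 0 < c) {r : ℕ}
    (hr : 48/(c*δ^2) ≤ r) (hr1 : 1 ≤ r) :
    2*((r:ℝ)+1) ≤ c * 2 ^ (δ*r) := by
  have hrpos : (0:ℝ) < r := by exact_mod_cast hr1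
  have hlog : (0.6931471803:ℝ) < Real.log 2 := Real.log_two_gt_d9
  have hu : (0:ℝ) ≤ δ * r * Real.log 2 := by positivity
  -- 2^(δr) = exp(δ r log 2) ≥ (δ r log 2)²/4
  have hexp : (δ*r*Real.log 2)^2/4 ≤ (2:ℝ) ^ (δ*(r:ℝ)) := by
    rw [Real.rpow_def_of_pos (by norm_num)]
    have h1 : δ*r*Real.log 2/2 ≤ Real.exp (δ*r*Real.log 2/2) := by
      have := Real.add_one_le_exp (δ*r*Real.log 2/2)
      linarith
    have h2 : Real.exp (δ*r*Real.log 2/2) * Real.exp (δ*r*Real.log 2/2)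
        = Real.exp (Real.log 2 * (δ*r)) := by
      rw [← Real.exp_add]
      ring_nf
    calc (δ*r*Real.log 2)^2/4 = (δ*r*Real.log 2/2) * (δ*r*Real.log 2/2) := by ring
      _ ≤ Real.exp (δ*r*Real.log 2/2) * Real.exp (δ*r*Real.log 2/2) := by
          apply mul_le_mul h1 h1 (by positivity) (Real.exp_nonneg _)
      _ = Real.exp (Real.log 2 * (δ*r)) := h2
  have hsq : δ^2*(r:ℝ)^2/12 ≤ (δ*r*Real.log 2)^2/4 := by
    have h3 : (1:ℝ)/3 ≤ (Real.log 2)^2 := by nlinarith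
    have h4 : (0:ℝ) ≤ δ^2 * r^2 := by positivity
    calc δ^2*(r:ℝ)^2/12 = (δ^2*r^2) * (1/3) / 4 := by ring
      _ ≤ (δ^2*r^2) * (Real.log 2)^2 / 4 := by
          apply div_le_div_of_nonneg_right _ (by norm_num)
          exact mul_le_mul_of_nonneg_left h3 h4
      _ = (δ*r*Real.log 2)^2/4 := by ring
  have hmain : 2*((r:ℝ)+1) ≤ c * (δ^2*(r:ℝ)^2/12) := by
    have h48 : 48 ≤ c*δ^2*r := by
      rw [div_le_iff₀ (by positivity)] at hr
      linarith
    have hr1' : (1:ℝ) ≤ (r:ℝ) := by exact_mod_cast hr1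
    have : 2*((r:ℝ)+1) ≤ 4*r := by linarith
    calc 2*((r:ℝ)+1) ≤ 4*r := this
      _ ≤ c * (δ^2*(r:ℝ)^2/12) := by nlinarith
  calc 2*((r:ℝ)+1) ≤ c * (δ^2*(r:ℝ)^2/12) := hmain
    _ ≤ c * ((δ*r*Real.log 2)^2/4) := mul_le_mul_of_nonneg_left hsq hc.le
    _ ≤ c * (2:ℝ) ^ (δ*(r:ℝ)) := mul_le_mul_of_nonneg_left hexp hc.le

lemma card_le_rk {n : ℕ} (M : Finset (Fin n → ZMod 2)) {s : Finset (Fin n → ZMod 2)}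
    (hs : s ⊆ M) (hind : FIndep s) : s.card ≤ rk M := by
  apply le_csSup
  · refine ⟨M.card, ?_⟩
    rintro k ⟨t, ht, rfl, -⟩
    exact Finset.card_le_card ht
  · exact ⟨s, hs, rfl, hind⟩

set_option maxHeartbeats 1000000 in
/-- Dense Eulerian binary matroids can be partitioned into at most
`(2 + ε)|M|/(rank M + 1)` circuits. -/
theorem dense_circuit_decomposition (ε : ℝ) (hε : 0 < ε) :
    ∃ (r₀ : ℕ) (δ : ℝ), 0 < δ ∧
      ∀ (n : ℕ) (M : Finset (Fin n → ZMod 2)),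
        (0 : Fin n → ZMod 2) ∉ M → ∑ x ∈ M, x = 0 →
        r₀ ≤ rk M → (2 : ℝ) ^ ((1 - δ) * rk M) ≤ M.card →
        ∃ 𝒞 : Finset (Finset (Fin n → ZMod 2)), IsCircuitPartition M 𝒞 ∧
          (𝒞.card : ℝ) ≤ (2 + ε) * M.card / (rk M + 1) := by
  classical
  set ε' : ℝ := min ε 1 / 2 with hε'def
  have hε'pos : 0 < ε' := by
    have := lt_min hε one_pos
    positivity
  have hε'le : ε' ≤ 1/2 := by
    have : min ε 1 ≤ 1 := min_le_right _ _
    rw [hε'def]; linarith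
  set β : ℝ := 1/(2+ε') with hβdef
  set γ : ℝ := 1/2 - β with hγdef
  have h2ε' : (0:ℝ) < 2 + ε' := by linarith
  have hβpos : 0 < β := by positivity
  have hβlt : β < 1/2 := by
    rw [hβdef, div_lt_div_iff₀ h2ε' (by norm_num)]
    linarith
  have hβge : 2/5 ≤ β := by
    rw [hβdef, div_le_div_iff₀ (by norm_num) h2ε']
    linarith
  have hγpos : 0 < γ := by rw [hγdef]; linarith
  have hγle : γ ≤ 1/10 := by rw [hγdef]; linarith
  clear_value β γ
  set x : ℝ := 1 - 2*γ with hxdef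
  have hx0 : 0 < x := by rw [hxdef]; linarith [hγle, hγpos]
  have hx45 : 4/5 ≤ x := by rw [hxdef]; linarith
  have hx1 : x ≤ 1 := by rw [hxdef]; linarith
  set δ : ℝ := γ^2/8 with hδdef
  have hδpos : 0 < δ := by positivity
  clear_value ε' x δ
  refine ⟨⌈48/(ε' * δ^2)⌉₊ + 2, δ, hδpos, ?_⟩
  intro n M h0 hsum hrk hdense
  set r : ℕ := rk M with hrdef
  set N : ℕ := M.card with hNdef
  have hr2 : 2 ≤ r := le_trans (by omega) hrk
  have hr1 : 1 ≤ r := by omega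
  have hr48 : 48/(ε' * δ^2) ≤ (r:ℝ) := by
    calc 48/(ε' * δ^2) ≤ (⌈48/(ε' * δ^2)⌉₊ : ℝ) := Nat.le_ceil _
      _ ≤ (r:ℝ) := by exact_mod_cast le_trans (by omega) hrk
  -- the parameter m
  set y : ℝ := ((r:ℝ)+1)/(2+ε') with hydef
  have hypos : 0 < y := by positivity
  have hygt1 : 1 < y := by
    rw [hydef, lt_div_iff₀ h2ε']
    have : (2:ℝ) ≤ (r:ℝ) := by exact_mod_cast hr2
    linarith
  have hceil2 : 2 ≤ ⌈y⌉₊ := by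
    have : 1 < ⌈y⌉₊ := Nat.lt_ceil.mpr (by exact_mod_cast hygt1)
    omega
  set m : ℕ := ⌈y⌉₊ - 1 with hmdef
  clear_value y
  have hm1 : 1 ≤ m := by omega
  have hmcast : (m:ℝ) = (⌈y⌉₊:ℝ) - 1 := by
    rw [hmdef]
    push_cast [Nat.cast_sub (by omega : 1 ≤ ⌈y⌉₊)]
    ring
  have hmlow : y ≤ (m:ℝ)+1 := by
    rw [hmcast]
    have := Nat.le_ceil y
    linarith
  have hmhigh : (m:ℝ) ≤ β*((r:ℝ)+1) := by
    rw [hmcast]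
    have := Nat.ceil_lt_add_one hypos.le
    have hyβ : y = β*((r:ℝ)+1) := by
      rw [hydef, hβdef]; ring
    linarith [hyβ ▸ this]
  clear_value m
  -- apply the combinatorial partition result
  obtain ⟨𝒞, hpart, hbound⟩ := partition_aux (V := Fin n → ZMod 2) (r := r) hm1
    N M le_rfl h0 hsum (fun s hs hind => card_le_rk M hs hind)
  refine ⟨𝒞, hpart, ?_⟩
  set Φ : ℕ := ∑ i ∈ Finset.Icc 1 m, r.choose i with hΦdef
  have hboundN : (m+2) * 𝒞.card ≤ N + (m+2) * Φ :=
    hbound.trans (Nat.add_le_add_left (Nat.mul_le_mul_left _ (min_le_right _ _)) _)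
  have hm2pos : (0:ℝ) < (m:ℝ)+2 := by positivity
  have hcard : (𝒞.card:ℝ) ≤ (N:ℝ)/((m:ℝ)+2) + (Φ:ℝ) := by
    have hc : ((m:ℝ)+2) * (𝒞.card:ℝ) ≤ (N:ℝ) + ((m:ℝ)+2) * (Φ:ℝ) := by
      exact_mod_cast hboundN
    rw [div_add' _ _ _ (ne_of_gt hm2pos), le_div_iff₀ hm2pos]
    nlinarith
  -- Step A : N/(m+2) ≤ (2+ε')N/(r+1)
  have hrpos : (0:ℝ) < (r:ℝ)+1 := by positivity
  have hstepA : (N:ℝ)/((m:ℝ)+2) ≤ (2+ε')*(N:ℝ)/((r:ℝ)+1) := by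
    have hyle : y ≤ (m:ℝ)+2 := by linarith
    calc (N:ℝ)/((m:ℝ)+2) ≤ (N:ℝ)/y := by
          apply div_le_div_of_nonneg_left (Nat.cast_nonneg N) hypos hyle
      _ = (N:ℝ)*(2+ε')/((r:ℝ)+1) := by rw [hydef, div_div_eq_mul_div]
      _ = (2+ε')*(N:ℝ)/((r:ℝ)+1) := by ring
  -- Step B : Φ ≤ ε' N/(r+1)
  have hstepB : (Φ:ℝ) ≤ ε'*(N:ℝ)/((r:ℝ)+1) := by
    have hΦcast : (Φ:ℝ) = ∑ i ∈ Finset.Icc 1 m, (r.choose i : ℝ) := by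
      rw [hΦdef]; push_cast; rfl
    have hB1 : (Φ:ℝ) ≤ (1+x)^r / x^m := by
      rw [le_div_iff₀ (pow_pos hx0 m), hΦcast]
      exact chernoff_sum r m hx0 hx1
    have hcore : 1 + x ≤ 2 ^ ((1:ℝ) - 2*δ) * x ^ (β:ℝ) := by
      have h := core_ineq hγpos hγle
      have hβγ : β = (1:ℝ)/2 - γ := by rw [hγdef]; ring
      calc 1 + x = 1 + (1 - 2*γ) := by rw [hxdef]
        _ ≤ 2 ^ ((1:ℝ) - 2*(γ^2/8)) * (1 - 2*γ) ^ ((1:ℝ)/2 - γ) := h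
        _ = 2 ^ ((1:ℝ) - 2*δ) * x ^ (β:ℝ) := by rw [hδdef, hxdef, hβγ]
    have hB2 : (1+x)^r ≤ (2:ℝ) ^ (((1:ℝ)-2*δ)*(r:ℝ)) * x ^ (β*(r:ℝ)) := by
      calc (1+x)^r ≤ (2 ^ ((1:ℝ) - 2*δ) * x ^ (β:ℝ))^r :=
            pow_le_pow_left₀ (by linarith) hcore r
        _ = (2 ^ ((1:ℝ) - 2*δ))^r * (x ^ (β:ℝ))^r := mul_pow _ _ _
        _ = (2:ℝ) ^ (((1:ℝ)-2*δ)*(r:ℝ)) * x ^ (β*(r:ℝ)) := by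
            rw [← Real.rpow_natCast (2 ^ ((1:ℝ) - 2*δ)) r,
              ← Real.rpow_natCast (x ^ (β:ℝ)) r,
              ← Real.rpow_mul (by norm_num : (0:ℝ) ≤ 2),
              ← Real.rpow_mul hx0.le]
    have hB3 : x ^ (β*(r:ℝ)) / x^m ≤ 2 := by
      have hxm : x^m = x ^ ((m:ℝ)) := (Real.rpow_natCast x m).symm
      rw [hxm, ← Real.rpow_sub hx0]
      have hexp : -1 ≤ β*(r:ℝ) - (m:ℝ) := by
        have : (m:ℝ) ≤ β*(r:ℝ) + β := by
          have := hmhigh; nlinarith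
        nlinarith
      calc x ^ (β*(r:ℝ) - (m:ℝ)) ≤ x ^ (-1:ℝ) :=
            Real.rpow_le_rpow_of_exponent_ge hx0 hx1 hexp
        _ = x⁻¹ := Real.rpow_neg_one x
        _ ≤ 2 := by
            rw [inv_le_comm₀ (by linarith) (by norm_num)]
            linarith
    have hB4 : (Φ:ℝ) ≤ 2 * (2:ℝ) ^ (((1:ℝ)-2*δ)*(r:ℝ)) := by
      calc (Φ:ℝ) ≤ (1+x)^r / x^m := hB1
        _ ≤ ((2:ℝ) ^ (((1:ℝ)-2*δ)*(r:ℝ)) * x ^ (β*(r:ℝ))) / x^m := by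
            exact (div_le_div_iff_of_pos_right (pow_pos hx0 m)).mpr hB2
        _ = (2:ℝ) ^ (((1:ℝ)-2*δ)*(r:ℝ)) * (x ^ (β*(r:ℝ)) / x^m) := by ring
        _ ≤ (2:ℝ) ^ (((1:ℝ)-2*δ)*(r:ℝ)) * 2 := by
            apply mul_le_mul_of_nonneg_left hB3 (Real.rpow_nonneg (by norm_num) _)
        _ = 2 * (2:ℝ) ^ (((1:ℝ)-2*δ)*(r:ℝ)) := by ring
    have hgrow : 2*((r:ℝ)+1) ≤ ε' * 2 ^ (δ*(r:ℝ)) := growth_ineq hδpos hε'pos hr48 hr1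
    have hB5 : 2 * (2:ℝ) ^ (((1:ℝ)-2*δ)*(r:ℝ)) ≤ ε' * (2:ℝ) ^ (((1:ℝ)-δ)*(r:ℝ)) / ((r:ℝ)+1) := by
      rw [le_div_iff₀ hrpos]
      have hsplit : (2:ℝ) ^ (((1:ℝ)-δ)*(r:ℝ))
          = (2:ℝ) ^ (δ*(r:ℝ)) * (2:ℝ) ^ (((1:ℝ)-2*δ)*(r:ℝ)) := by
        rw [← Real.rpow_add (by norm_num : (0:ℝ) < 2)]
        ring_nf
      rw [hsplit]
      have hpow_nonneg : (0:ℝ) ≤ (2:ℝ) ^ (((1:ℝ)-2*δ)*(r:ℝ)) := Real.rpow_nonneg (by norm_num) _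
      calc 2 * (2:ℝ) ^ (((1:ℝ)-2*δ)*(r:ℝ)) * ((r:ℝ)+1)
          = (2*((r:ℝ)+1)) * (2:ℝ) ^ (((1:ℝ)-2*δ)*(r:ℝ)) := by ring
        _ ≤ (ε' * 2 ^ (δ*(r:ℝ))) * (2:ℝ) ^ (((1:ℝ)-2*δ)*(r:ℝ)) :=
            mul_le_mul_of_nonneg_right hgrow hpow_nonneg
        _ = ε' * ((2:ℝ) ^ (δ*(r:ℝ)) * (2:ℝ) ^ (((1:ℝ)-2*δ)*(r:ℝ))) := by ring
    have hB6 : ε' * (2:ℝ) ^ (((1:ℝ)-δ)*(r:ℝ)) / ((r:ℝ)+1) ≤ ε'*(N:ℝ)/((r:ℝ)+1) := by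
      apply (div_le_div_iff_of_pos_right hrpos).mpr
      apply mul_le_mul_of_nonneg_left _ hε'pos.le
      exact_mod_cast hdense
    linarith
  -- conclusion
  have h2ε'ε : 2 + ε' + ε' ≤ 2 + ε := by
    have : min ε 1 ≤ ε := min_le_left _ _
    rw [hε'def]; linarith
  have hNnn : (0:ℝ) ≤ (N:ℝ) := Nat.cast_nonneg N
  calc (𝒞.card:ℝ) ≤ (N:ℝ)/((m:ℝ)+2) + (Φ:ℝ) := hcard
    _ ≤ (2+ε')*(N:ℝ)/((r:ℝ)+1) + ε'*(N:ℝ)/((r:ℝ)+1) := add_le_add hstepA hstepB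
    _ = (2+ε'+ε')*(N:ℝ)/((r:ℝ)+1) := by ring
    _ ≤ (2+ε)*(N:ℝ)/((r:ℝ)+1) := by
        apply (div_le_div_iff_of_pos_right hrpos).mpr
        apply mul_le_mul_of_nonneg_right _ hNnn
        exact h2ε'ε
    _ = (2+ε)*(M.card:ℝ)/((rk M:ℝ)+1) := by rw [hNdef, hrdef]
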